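/- For a 2×2 real matrix [[w0, w12],[w12, w0]] with w0 and w12 independent standard normal random variables, the expected absolute value of the determinant, E|w0² - w12²|, equals 4/π. -/

import Mathlib

open MeasureTheory Real Set Filter

lemma integral_Ioi_mul_exp : ∫ x in Set.Ioi (0:ℝ), x * Real.exp (-x ^ 2 / 2) = 1 := by
  have hderiv : ∀ x ∈ Set.Ici (0:ℝ),
      HasDerivAt (fun y : ℝ => -Real.exp (-y ^ 2 / 2)) (x * Real.exp (-x ^ 2 / 2)) x := by
    intro x _
    have h1 : HasDerivAt (fun y : ℝ => -y ^ 2 / 2) (-x) x := by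
      have := ((hasDerivAt_pow 2 x).neg.div_const 2)
      refine this.congr_deriv ?_
      simp; ring
    have := h1.exp.neg
    refine this.congr_deriv ?_
    ring
  have hint : IntegrableOn (fun x : ℝ => x * Real.exp (-x ^ 2 / 2)) (Set.Ioi 0) := by
    have := (integrable_mul_exp_neg_mul_sq (by norm_num : (0:ℝ) < 1/2)).integrableOn
      (s := Set.Ioi (0:ℝ))
    refine this.congr_fun (fun x _ => ?_) measurableSet_Ioi
    ring_nf
  have htend : Tendsto (fun y : ℝ => -Real.exp (-y ^ 2 / 2)) atTop (nhds (0:ℝ)) := by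
    rw [show (0:ℝ) = -0 by norm_num]
    refine Tendsto.neg ?_
    refine Real.tendsto_exp_atBot.comp ?_
    have h2 : Tendsto (fun y : ℝ => y ^ 2 / 2) atTop atTop :=
      (tendsto_pow_atTop two_ne_zero).atTop_div_const (by norm_num)
    have := tendsto_neg_atBot_iff.mpr h2
    refine this.congr (fun y => by ring)
  have := integral_Ioi_of_hasDerivAt_of_tendsto' hderiv hint htend
  rw [this]
  norm_num

lemma integral_abs_mul_exp : ∫ u : ℝ, |u| * Real.exp (-u ^ 2 / 2) = 2 := by
  have h : ∀ u : ℝ, |u| * Real.exp (-u ^ 2 / 2)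
      = (fun x : ℝ => x * Real.exp (-x ^ 2 / 2)) |u| := by
    intro u
    simp only
    rw [← sq_abs u]
  calc ∫ u : ℝ, |u| * Real.exp (-u ^ 2 / 2)
      = ∫ u : ℝ, (fun x : ℝ => x * Real.exp (-x ^ 2 / 2)) |u| := by simp_rw [h]
    _ = 2 * ∫ x in Set.Ioi (0:ℝ), x * Real.exp (-x ^ 2 / 2) :=
        integral_comp_abs (f := fun x : ℝ => x * Real.exp (-x ^ 2 / 2))
    _ = 2 := by rw [integral_Ioi_mul_exp]; norm_num

/-- For independent standard normal `w₀, w₁₂`, the expected absolute determinant of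
`[[w₀, w₁₂], [w₁₂, w₀]]`, i.e. `E|w₀² - w₁₂²|`, equals `4/π`. -/
theorem expected_abs_det_two_by_two :
    (∫ w : ℝ × ℝ, |w.1 ^ 2 - w.2 ^ 2| *
      ((1 / (2 * π)) * Real.exp (-(w.1 ^ 2 + w.2 ^ 2) / 2))) = 4 / π := by
  set a : ℝ := (Real.sqrt 2)⁻¹ with ha
  have ha2 : a ^ 2 = 1 / 2 := by
    rw [ha, ← Real.sqrt_inv, Real.sq_sqrt (by norm_num)]
    norm_num
  set L : (ℝ × ℝ) →ₗ[ℝ] (ℝ × ℝ) :=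
    Matrix.toLin (Module.Basis.finTwoProd ℝ) (Module.Basis.finTwoProd ℝ) !![a, a; a, -a] with hL
  have hdet : LinearMap.det L = -1 := by
    rw [hL, LinearMap.det_toLin, Matrix.det_fin_two_of]
    nlinarith [ha2]
  have hmap : Measure.map L volume = volume := by
    rw [Measure.map_linearMap_addHaar_eq_smul_addHaar volume (by rw [hdet]; norm_num), hdet]
    norm_num
  set F : ℝ × ℝ → ℝ := fun w => |w.1 ^ 2 - w.2 ^ 2| *
      ((1 / (2 * π)) * Real.exp (-(w.1 ^ 2 + w.2 ^ 2) / 2)) with hF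
  have hFc : Continuous F := by fun_prop
  have key : (∫ w : ℝ × ℝ, F w) = ∫ w : ℝ × ℝ, F (L w) := by
    conv_lhs => rw [← hmap]
    exact integral_map (L.continuous_of_finiteDimensional.aemeasurable)
      hFc.aestronglyMeasurable
  have hLapp : ∀ w : ℝ × ℝ, L w = (a * w.1 + a * w.2, a * w.1 + -a * w.2) := by
    intro w
    rw [hL, Matrix.toLin_finTwoProd_apply]
  have hpt : ∀ w : ℝ × ℝ, F (L w) =
      (|w.1| * Real.exp (-w.1 ^ 2 / 2)) *
        ((1 / π) * (|w.2| * Real.exp (-w.2 ^ 2 / 2))) := by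
    intro w
    rw [hF, hLapp w]
    simp only
    have e1 : (a * w.1 + a * w.2) ^ 2 - (a * w.1 + -a * w.2) ^ 2 = 2 * (w.1 * w.2) := by
      linear_combination (4 * w.1 * w.2) * ha2
    have e2 : -((a * w.1 + a * w.2) ^ 2 + (a * w.1 + -a * w.2) ^ 2) / 2
        = -w.1 ^ 2 / 2 + -w.2 ^ 2 / 2 := by
      linear_combination (-(w.1 ^ 2 + w.2 ^ 2)) * ha2
    rw [e1, e2, Real.exp_add, abs_mul, abs_mul, abs_two]
    ring
  rw [key]
  simp_rw [hpt]
  rw [Measure.volume_eq_prod,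
    MeasureTheory.integral_prod_mul (f := fun u : ℝ => |u| * Real.exp (-u ^ 2 / 2))
    (g := fun v : ℝ => (1 / π) * (|v| * Real.exp (-v ^ 2 / 2))),
    MeasureTheory.integral_const_mul, integral_abs_mul_exp]
  field_simp
  norm_num
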